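/- Let Λ be a finite-dimensional algebra over a field k and M a finite length Λ-module with a simple direct summand S. Let Γ = End_Λ(M) and let e ∈ Γ be the idempotent corresponding to the projection onto S. Then the ideal I = ΓeΓ is a projective left Γ-module. -/

import Mathlib

/-!
STATEMENT 0. Let Λ be a finite-dimensional algebra over a field k and M a finite length
Λ-module with a simple direct summand S.  Let Γ = End_Λ(M) and e ∈ Γ the idempotent
corresponding to the projection onto S (i.e. e = ι ∘ π for the splitting π ∘ ι = id).
Then the two-sided ideal I = ΓeΓ is a projective left Γ-module.
-/

open LinearMap

section Aux

variable {Λ : Type} [Ring Λ] {S : Type} [AddCommGroup S] [Module Λ S]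

/-- If a map `g : M → S` (with `S` simple) vanishes on the intersection of the kernels of a
finite family of maps `f i : M → S`, then `g` is an `End_Λ(S)`-linear combination of the
`f i`. -/
theorem exists_combination_of_iInf_ker_le_ker (hS : IsSimpleModule Λ S)
    {ι : Type} (t : Finset ι) :
    ∀ (M : Type) [AddCommGroup M] [Module Λ M] (f : ι → (M →ₗ[Λ] S)) (g : M →ₗ[Λ] S),
      (⨅ i ∈ t, ker (f i)) ≤ ker g →
      ∃ c : ι → Module.End Λ S, g = ∑ i ∈ t, c i • f i := by
  classical
  induction t using Finset.induction_on with
  | empty =>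
    intro M _ _ f g hker
    refine ⟨fun _ => 0, ?_⟩
    have hg : g = 0 := by
      ext x
      have : x ∈ ker g := hker (by simp)
      simpa using this
    simp [hg]
  | @insert a s ha ih =>
    intro M _ _ f g hker
    -- restrict everything to the kernel of `f a`
    obtain ⟨c, hc⟩ := ih (ker (f a)) (fun i => (f i) ∘ₗ (ker (f a)).subtype)
        (g ∘ₗ (ker (f a)).subtype) (by
      intro x hx
      simp only [Submodule.mem_iInf, mem_ker, comp_apply] at hx ⊢
      have hxmem : (x : M) ∈ ⨅ i ∈ insert a s, ker (f i) := by
        simp only [Submodule.mem_iInf]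
        intro i hi
        rcases Finset.mem_insert.mp hi with rfl | hi'
        · exact x.2
        · exact hx i hi'
      simpa using hker hxmem)
    -- `h` vanishes on `ker (f a)`
    set h := g - ∑ i ∈ s, c i • f i with hh
    have hker2 : ker (f a) ≤ ker h := by
      intro x hx
      have := congrArg (fun φ => φ (⟨x, hx⟩ : ker (f a))) hc
      simp only [comp_apply, Submodule.coe_subtype, LinearMap.sum_apply, LinearMap.smul_apply] at this
      simp only [hh, mem_ker, LinearMap.sub_apply, LinearMap.sum_apply, LinearMap.smul_apply]
      rw [sub_eq_zero]
      exact this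
    by_cases hfa : f a = 0
    · -- then `h = 0`
      have hg : g = ∑ i ∈ s, c i • f i := by
        rw [← sub_eq_zero, ← hh]
        ext x
        have : x ∈ ker h := hker2 (by simp [hfa])
        simpa using this
      refine ⟨Function.update c a 0, ?_⟩
      rw [Finset.sum_insert ha, hg, Function.update_self, zero_smul, zero_add]
      refine Finset.sum_congr rfl fun i hi => ?_
      rw [Function.update_of_ne (by rintro rfl; exact ha hi)]
    · -- `f a` is surjective, so `h` factors through it
      have hsurj : Function.Surjective (f a) := by
        have := hS
        rcases eq_bot_or_eq_top (LinearMap.range (f a)) with hr | hr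
        · exact absurd (LinearMap.range_eq_bot.mp hr) hfa
        · exact LinearMap.range_eq_top.mp hr
      set q := (f a).quotKerEquivOfSurjective hsurj with hq
      set d : Module.End Λ S :=
        (Submodule.liftQ (ker (f a)) h hker2) ∘ₗ q.symm.toLinearMap with hd
      have hdval : ∀ x : M, d (f a x) = h x := by
        intro x
        have hq1 : q (Submodule.Quotient.mk x) = f a x := rfl
        have hq2 : q.symm (f a x) = Submodule.Quotient.mk x := by
          rw [← hq1, LinearEquiv.symm_apply_apply]
        simp only [hd, comp_apply, LinearEquiv.coe_coe, hq2]
        exact Submodule.liftQ_apply _ _ _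
      refine ⟨Function.update c a d, ?_⟩
      rw [Finset.sum_insert ha]
      have hsum : ∑ i ∈ s, Function.update c a d i • f i = ∑ i ∈ s, c i • f i :=
        Finset.sum_congr rfl fun i hi => by
          rw [Function.update_of_ne (by rintro rfl; exact ha hi)]
      rw [hsum, Function.update_self]
      ext x
      have hx : g x - (∑ i ∈ s, c i • f i) x = d (f a x) := by
        have := (hdval x).symm
        simpa [hh] using this
      have hgx : g x = d (f a x) + (∑ i ∈ s, c i • f i) x := by
        rw [← hx]; abel
      simpa using hgx

/-- If `∑ i ∈ t, g i ∘ f i = 0` where the `f i : M →ₗ[Λ] S` are linearly independent over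
`End_Λ(S)` and `S` is simple, then each `g i = 0`. -/
theorem comp_eq_zero_of_sum_eq_zero (hS : IsSimpleModule Λ S)
    {M : Type} [AddCommGroup M] [Module Λ M] {ι : Type} (t : Finset ι)
    (f : ι → (M →ₗ[Λ] S)) (hf : LinearIndependent (Module.End Λ S) f)
    (g : ι → (S →ₗ[Λ] M)) (hsum : ∑ i ∈ t, (g i) ∘ₗ (f i) = 0) :
    ∀ i ∈ t, g i = 0 := by
  classical
  intro i₀ hi₀
  by_cases hK : (⨅ i ∈ t.erase i₀, ker (f i)) ≤ ker (f i₀)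
  · -- contradiction with linear independence
    exfalso
    obtain ⟨c, hc⟩ := exists_combination_of_iInf_ker_le_ker hS (t.erase i₀) M f (f i₀) hK
    have hmem : f i₀ ∈ Submodule.span (Module.End Λ S) (f '' ↑(t.erase i₀)) := by
      rw [hc]
      refine Submodule.sum_mem _ fun i hi => ?_
      exact Submodule.smul_mem _ _ (Submodule.subset_span ⟨i, hi, rfl⟩)
    have := hS
    haveI : Nontrivial (Module.End Λ S) := by
      refine ⟨0, 1, ?_⟩
      haveI := IsSimpleModule.nontrivial Λ S
      intro h01
      obtain ⟨x, y, hxy⟩ := exists_pair_ne S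
      have hx := congrArg (fun φ : Module.End Λ S => φ (x - y)) h01
      simp only [LinearMap.zero_apply, Module.End.one_apply] at hx
      exact hxy (by rw [← sub_eq_zero, ← hx])
    exact hf.notMem_span_image (by simp) hmem
  · -- there is `x` in all other kernels with `f i₀ x ≠ 0`
    have hKmap : Submodule.map (f i₀) (⨅ i ∈ t.erase i₀, ker (f i)) = ⊤ := by
      have := hS
      rcases eq_bot_or_eq_top (Submodule.map (f i₀) (⨅ i ∈ t.erase i₀, ker (f i))) with hr | hr
      · exfalso
        apply hK
        intro x hx
        have : f i₀ x ∈ Submodule.map (f i₀) (⨅ i ∈ t.erase i₀, ker (f i)) :=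
          ⟨x, hx, rfl⟩
        rw [hr] at this
        simpa using this
      · exact hr
    ext s
    have hs : (s : S) ∈ Submodule.map (f i₀) (⨅ i ∈ t.erase i₀, ker (f i)) := by
      rw [hKmap]; trivial
    obtain ⟨x, hx, hfx⟩ := hs
    have heval := congrArg (fun φ : Module.End Λ M => φ x) hsum
    simp only [LinearMap.sum_apply, comp_apply, LinearMap.zero_apply] at heval
    have hsingle : ∑ i ∈ t, (g i) ((f i) x) = (g i₀) ((f i₀) x) := by
      refine Finset.sum_eq_single_of_mem i₀ hi₀ fun i hi hne => ?_
      have hxk : x ∈ ker (f i) :=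
        (Submodule.mem_iInf _).mp ((Submodule.mem_iInf _).mp hx i)
          (Finset.mem_erase.mpr ⟨hne, hi⟩)
      rw [mem_ker] at hxk
      rw [hxk, map_zero]
    rw [hsingle, hfx] at heval
    simpa using heval

variable {M : Type} [AddCommGroup M] [Module Λ M]

set_option maxHeartbeats 1000000 in
set_option synthInstance.maxHeartbeats 200000 in
/-- The main result, with only the needed hypotheses. -/
theorem aux_main (hS : IsSimpleModule Λ S)
    (ι : S →ₗ[Λ] M) (π : M →ₗ[Λ] S) (hsplit : π ∘ₗ ι = LinearMap.id)
    (e : Module.End Λ M) (he : e = ι ∘ₗ π)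
    (I : Submodule (Module.End Λ M) (Module.End Λ M))
    (hI : I = Submodule.span (Module.End Λ M)
      {x : Module.End Λ M | ∃ a b : Module.End Λ M, x = a * e * b}) :
    Module.Projective (Module.End Λ M) I := by
  classical
  haveI := hS
  have hpi : ∀ x : S, π (ι x) = x := fun x => by
    have := congrArg (fun φ : S →ₗ[Λ] S => φ x) hsplit
    simpa using this
  -- `J = Γe`, a projective left `Γ`-module
  set E : Module.End Λ M → (Module.End Λ M →ₗ[Module.End Λ M] Module.End Λ M) :=
    fun c => LinearMap.toSpanSingleton (Module.End Λ M) (Module.End Λ M) c with hE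
  set J : Submodule (Module.End Λ M) (Module.End Λ M) := LinearMap.range (E e) with hJdef
  have hJ : ∀ x ∈ J, x * e = x := by
    rintro x ⟨y, rfl⟩
    have hEy : (E e) y = y * e := rfl
    rw [hEy, mul_assoc]
    congr 1
    rw [he]
    ext m
    simp only [Module.End.mul_apply, comp_apply, hpi]
  have projJ : Module.Projective (Module.End Λ M) J := by
    refine Module.Projective.of_split J.subtype
      ((E e).codRestrict J fun c => LinearMap.mem_range_self _ c) ?_
    apply LinearMap.ext
    rintro ⟨x, hx⟩
    apply Subtype.ext
    have hEx : (E e) x = x * e := rfl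
    show (E e) x = x
    rw [hEx]
    exact hJ x hx
  -- basis of `Hom(M, S)` over the division ring `End Λ S`
  set B := ↥(Module.Basis.ofVectorSpaceIndex (Module.End Λ S) (M →ₗ[Λ] S)) with hB
  set bs : Module.Basis B (Module.End Λ S) (M →ₗ[Λ] S) :=
    Module.Basis.ofVectorSpace (Module.End Λ S) (M →ₗ[Λ] S) with hbs
  -- the map `(B →₀ J) → Γ`, `(x_i) ↦ ∑ x_i * (ι ∘ f_i)`
  set T : (B →₀ J) →ₗ[Module.End Λ M] Module.End Λ M :=
    Finsupp.lsum ℕ (fun i : B => (E (ι ∘ₗ (i : M →ₗ[Λ] S))) ∘ₗ J.subtype) with hT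
  have hTsingle : ∀ (i : B) (x : J),
      T (Finsupp.single i x) = (x : Module.End Λ M) * (ι ∘ₗ (i : M →ₗ[Λ] S)) := by
    intro i x
    rw [hT, Finsupp.lsum_single]
    rfl
  -- the range of `T` is contained in `I`
  have memI : ∀ w : (B →₀ J), T w ∈ I := by
    intro w
    induction w using Finsupp.induction_linear with
    | zero => simp only [map_zero]; exact Submodule.zero_mem I
    | add u v hu hv => rw [map_add]; exact Submodule.add_mem I hu hv
    | single i x =>
      rw [hTsingle]
      rw [hI]
      apply Submodule.subset_span
      refine ⟨(x : Module.End Λ M), ι ∘ₗ (i : M →ₗ[Λ] S), ?_⟩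
      rw [hJ (x : Module.End Λ M) x.2]
  set p : (B →₀ J) →ₗ[Module.End Λ M] I := T.codRestrict I memI with hp
  -- surjectivity
  have hTmem : ∀ z ∈ I, ∃ w : (B →₀ J), T w = z := by
    intro z hz
    rw [hI] at hz
    induction hz using Submodule.span_induction with
    | mem x hx =>
      obtain ⟨a, b, rfl⟩ := hx
      -- decompose `π ∘ b` in the basis
      set c : B →₀ (Module.End Λ S) := bs.repr (π ∘ₗ b) with hc
      have hFmem : ∀ d : Module.End Λ S, (a * (ι ∘ₗ d ∘ₗ π) : Module.End Λ M) ∈ J := by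
        intro d
        refine ⟨a * (ι ∘ₗ d ∘ₗ π), ?_⟩
        show (a * (ι ∘ₗ d ∘ₗ π)) • e = a * (ι ∘ₗ d ∘ₗ π)
        rw [smul_eq_mul, mul_assoc]
        congr 1
        rw [he]
        ext m
        simp only [Module.End.mul_apply, comp_apply, hpi]
      set F : Module.End Λ S → J := fun d => ⟨a * (ι ∘ₗ d ∘ₗ π), hFmem d⟩ with hF
      have hF0 : F 0 = 0 := by
        apply Subtype.ext
        show a * (ι ∘ₗ (0 : Module.End Λ S) ∘ₗ π) = 0
        have hz : (ι ∘ₗ (0 : Module.End Λ S) ∘ₗ π) = 0 := by ext m; simp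
        rw [hz, mul_zero]
      refine ⟨c.mapRange F hF0, ?_⟩
      -- compute T applied to this element
      have hTw : T (c.mapRange F hF0) =
          c.sum fun i d => (F d : Module.End Λ M) * (ι ∘ₗ (i : M →ₗ[Λ] S)) := by
        rw [hT]
        rw [Finsupp.lsum_apply]
        rw [Finsupp.sum_mapRange_index]
        · apply Finsupp.sum_congr
          intro i _
          rfl
        · intro i
          exact map_zero _
      rw [hTw]
      -- each term equals `a * (ι ∘ (d • f_i))`
      have hterm : ∀ (i : B) (d : Module.End Λ S),
          (F d : Module.End Λ M) * (ι ∘ₗ (i : M →ₗ[Λ] S))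
            = a * (ι ∘ₗ (d • (i : M →ₗ[Λ] S))) := by
        intro i d
        show (a * (ι ∘ₗ d ∘ₗ π)) * (ι ∘ₗ (i : M →ₗ[Λ] S)) = _
        ext m
        simp only [Module.End.mul_apply, comp_apply, hpi, LinearMap.smul_apply]
        rfl
      have hsum2 : c.sum (fun i d => (F d : Module.End Λ M) * (ι ∘ₗ (i : M →ₗ[Λ] S))) =
          c.sum fun i d => a * (ι ∘ₗ (d • (i : M →ₗ[Λ] S))) := by
        apply Finsupp.sum_congr
        intro i _
        exact hterm i _
      rw [hsum2]
      -- use additivity to pull the sum inside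
      set L : (M →ₗ[Λ] S) →+ Module.End Λ M :=
        { toFun := fun f => a * (ι ∘ₗ f)
          map_zero' := by simp
          map_add' := fun f g => by simp [comp_add, mul_add] } with hL
      have hsum3 : c.sum (fun i d => a * (ι ∘ₗ (d • (i : M →ₗ[Λ] S)))) =
          L (c.sum fun i d => d • (i : M →ₗ[Λ] S)) := by
        rw [map_finsuppSum]
        rfl
      rw [hsum3]
      have hrepr : c.sum (fun i d => d • (i : M →ₗ[Λ] S)) = π ∘ₗ b := by
        have hlc := bs.linearCombination_repr (π ∘ₗ b)
        rw [Finsupp.linearCombination_apply] at hlc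
        rw [← hlc, ← hc]
        apply Finsupp.sum_congr
        intro i _
        rw [hbs, Module.Basis.ofVectorSpace_apply_self]
      rw [hrepr]
      show a * (ι ∘ₗ (π ∘ₗ b)) = a * e * b
      rw [he]
      ext m
      simp only [Module.End.mul_apply, comp_apply]
    | zero => exact ⟨0, map_zero T⟩
    | add x y _ _ hx hy =>
      obtain ⟨w₁, hw₁⟩ := hx
      obtain ⟨w₂, hw₂⟩ := hy
      exact ⟨w₁ + w₂, by rw [map_add, hw₁, hw₂]⟩
    | smul r x _ hx =>
      obtain ⟨w, hw⟩ := hx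
      exact ⟨r • w, by rw [map_smul, hw]⟩
  have hsurj : Function.Surjective p := by
    rintro ⟨z, hz⟩
    obtain ⟨w, hw⟩ := hTmem z hz
    exact ⟨w, Subtype.ext hw⟩
  -- injectivity
  have hker0 : ∀ w : B →₀ J, T w = 0 → w = 0 := by
    intro w hTw
    -- rewrite `T w` as a sum of compositions
    have hTw2 : ∑ i ∈ w.support, ((w i : Module.End Λ M) ∘ₗ ι) ∘ₗ ((i : M →ₗ[Λ] S)) = 0 := by
      rw [← hTw, hT, Finsupp.lsum_apply]
      rw [Finsupp.sum]
      refine Finset.sum_congr rfl fun i _ => ?_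
      show ((w i : Module.End Λ M) ∘ₗ ι) ∘ₗ ((i : M →ₗ[Λ] S))
        = ((E (ι ∘ₗ (i : M →ₗ[Λ] S))) ∘ₗ J.subtype) (w i)
      have hEw : ((E (ι ∘ₗ (i : M →ₗ[Λ] S))) ∘ₗ J.subtype) (w i)
          = (w i : Module.End Λ M) * (ι ∘ₗ (i : M →ₗ[Λ] S)) := rfl
      rw [hEw]
      ext m
      simp only [Module.End.mul_apply, comp_apply]
    have hindep : LinearIndependent (Module.End Λ S) (fun i : B => (i : M →ₗ[Λ] S)) := by
      have hli := bs.linearIndependent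
      have heq : (fun i : B => (i : M →ₗ[Λ] S)) = fun i : B => bs i := by
        funext i
        rw [hbs, Module.Basis.ofVectorSpace_apply_self]
      rw [heq]
      exact hli
    have hzero := comp_eq_zero_of_sum_eq_zero hS w.support
      (fun i : B => (i : M →ₗ[Λ] S)) hindep
      (fun i => (w i : Module.End Λ M) ∘ₗ ι) hTw2
    apply Finsupp.ext
    intro i
    by_cases hi : i ∈ w.support
    · have h1 : (w i : Module.End Λ M) ∘ₗ ι = 0 := hzero i hi
      have h2 : (w i : Module.End Λ M) = 0 := by
        have h3 : (w i : Module.End Λ M) * e = (w i : Module.End Λ M) := hJ _ (w i).2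
        rw [← h3, he]
        ext m
        have h4 := congrArg (fun φ : S →ₗ[Λ] M => φ (π m)) h1
        simp only [comp_apply, LinearMap.zero_apply] at h4
        simpa [Module.End.mul_apply] using h4
      exact Subtype.ext (by rw [h2]; rfl)
    · exact Finsupp.notMem_support_iff.mp hi
  have hinj : Function.Injective p := by
    intro w₁ w₂ hww
    have h12 : T w₁ = T w₂ := congrArg Subtype.val hww
    have hsub : T (w₁ - w₂) = 0 := by
      have hms : T (w₁ - w₂) = T w₁ - T w₂ := LinearMap.map_sub T w₁ w₂
      rw [hms, h12, sub_self]
    exact sub_eq_zero.mp (hker0 _ hsub)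
  -- conclude
  have equiv : (B →₀ J) ≃ₗ[Module.End Λ M] I := LinearEquiv.ofBijective p ⟨hinj, hsurj⟩
  haveI := projJ
  haveI : Module.Projective (Module.End Λ M) (Π₀ _ : B, J) := by infer_instance
  haveI : Module.Projective (Module.End Λ M) (B →₀ J) :=
    Module.Projective.of_equiv
      (finsuppLequivDFinsupp (R := Module.End Λ M) (M := J) (ι := B)).symm
  exact Module.Projective.of_equiv equiv

end Aux

theorem twoSidedIdeal_of_simple_summand_projective
    (k : Type) [Field k] (Λ : Type) [Ring Λ] [Algebra k Λ] [FiniteDimensional k Λ]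
    (M S : Type) [AddCommGroup M] [Module Λ M] [AddCommGroup S] [Module Λ S]
    (_hlen : IsFiniteLength Λ M) (_hS : IsSimpleModule Λ S)
    (ι : S →ₗ[Λ] M) (π : M →ₗ[Λ] S) (_hsplit : π ∘ₗ ι = LinearMap.id)
    (e : Module.End Λ M) (_he : e = ι ∘ₗ π)
    (I : Submodule (Module.End Λ M) (Module.End Λ M))
    (_hI : I = Submodule.span (Module.End Λ M)
      {x : Module.End Λ M | ∃ a b : Module.End Λ M, x = a * e * b}) :
    Module.Projective (Module.End Λ M) I :=
  aux_main _hS ι π _hsplit e _he I _hI
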